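/- There exists a constant C > 0, depending only on α, |θ|, |σ| and P = sup_{π ∈ 𝒞} |π|, such that for all z, z' ∈ ℝ and all u ∈ L²(n) ∩ L^∞(n): |f(z, u) − f(z', u)| ≤ C·(1 + |z| + |z'|)·|z − z'|. -/

import Mathlib

open MeasureTheory

/-- `g α y = (exp(α y) − α y − 1)/α`. -/
noncomputable def g (α y : ℝ) : ℝ := (Real.exp (α * y) - α * y - 1) / α

/-- `u ∈ L²(n) ∩ L^∞(n)`: measurable, square integrable and essentially bounded. -/
def MemL2Linf (n : Measure ℝ) (u : ℝ → ℝ) : Prop :=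
  Measurable u ∧ Integrable (fun x => (u x) ^ 2) n ∧ ∃ K : ℝ, ∀ᵐ x ∂n, |u x| ≤ K

/-- The generator
`f(z,u) = inf_{π ∈ 𝒞} [ (α/2)(πσ − (z + θ/α))² + ∫ g_α(u(x) − πβ(x)) dn(x) ] − θz − θ²/(2α)`. -/
noncomputable def gen (α θ σ : ℝ) (β : ℝ → ℝ) (𝒞 : Set ℝ) (n : Measure ℝ)
    (z : ℝ) (u : ℝ → ℝ) : ℝ :=
  sInf ((fun π => α / 2 * (π * σ - (z + θ / α)) ^ 2
      + ∫ x, g α (u x - π * β x) ∂n) '' 𝒞) - θ * z - θ ^ 2 / (2 * α)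

lemma g_nonneg {α : ℝ} (hα : 0 < α) (y : ℝ) : 0 ≤ g α y := by
  unfold g
  apply div_nonneg _ hα.le
  nlinarith [Real.add_one_le_exp (α * y)]

lemma csInf_sub_le_aux {A : Set ℝ} (hA : A.Nonempty) {F G : ℝ → ℝ}
    (hF0 : ∀ a ∈ A, 0 ≤ F a) {D : ℝ}
    (h : ∀ a ∈ A, F a - G a ≤ D) : sInf (F '' A) - sInf (G '' A) ≤ D := by
  have hbF : BddBelow (F '' A) := ⟨0, by rintro _ ⟨a, ha, rfl⟩; exact hF0 a ha⟩
  rw [sub_le_comm]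
  apply le_csInf (hA.image G)
  rintro _ ⟨a, ha, rfl⟩
  have h1 : sInf (F '' A) ≤ F a := csInf_le hbF ⟨a, ha, rfl⟩
  have h2 := h a ha
  linarith

set_option maxHeartbeats 1000000 in
theorem stmt9 (α θ σ : ℝ) (hα : 0 < α) (n : Measure ℝ) [SigmaFinite n]
    (β : ℝ → ℝ) (hβ : MemL2Linf n β)
    (𝒞 : Set ℝ) (h𝒞c : IsCompact 𝒞) (h𝒞ne : 𝒞.Nonempty) (h𝒞0 : (0:ℝ) ∈ 𝒞) :
    ∃ C : ℝ, 0 < C ∧ ∀ (z z' : ℝ) (u : ℝ → ℝ), MemL2Linf n u →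
      |gen α θ σ β 𝒞 n z u - gen α θ σ β 𝒞 n z' u| ≤
        C * (1 + |z| + |z'|) * |z - z'| := by
  -- bound on 𝒞
  obtain ⟨r, hr⟩ := h𝒞c.isBounded.subset_closedBall 0
  set P : ℝ := max r 0 with hPdef
  have hP0 : 0 ≤ P := le_max_right _ _
  have hPb : ∀ π ∈ 𝒞, |π| ≤ P := by
    intro π hπ
    have := hr hπ
    rw [Metric.mem_closedBall, Real.dist_eq, sub_zero] at this
    exact this.trans (le_max_left _ _)
  refine ⟨1 + 2 * |θ| + α * P * |σ| + α / 2, by positivity, ?_⟩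
  intro z z' u hu
  set t := |z - z'| with htdef
  have ht : 0 ≤ t := abs_nonneg _
  have hs : 0 ≤ |z| + |z'| := by positivity
  set D : ℝ := α * P * |σ| * t + α / 2 * (|z| + |z'|) * t + |θ| * t with hDdef
  set Fz : ℝ → ℝ := fun π => α / 2 * (π * σ - (z + θ / α)) ^ 2
      + ∫ x, g α (u x - π * β x) ∂n with hFz
  set Fz' : ℝ → ℝ := fun π => α / 2 * (π * σ - (z' + θ / α)) ^ 2
      + ∫ x, g α (u x - π * β x) ∂n with hFz'
  have hI0 : ∀ π : ℝ, 0 ≤ ∫ x, g α (u x - π * β x) ∂n := fun π =>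
    integral_nonneg fun x => g_nonneg hα _
  have hF0 : ∀ a ∈ 𝒞, 0 ≤ Fz a := fun a _ => add_nonneg (by positivity) (hI0 a)
  have hF0' : ∀ a ∈ 𝒞, 0 ≤ Fz' a := fun a _ => add_nonneg (by positivity) (hI0 a)
  have hdiff : ∀ π ∈ 𝒞, |Fz π - Fz' π| ≤ D := by
    intro π hπ
    have hπP := hPb π hπ
    have hPσ : |π * σ| ≤ P * |σ| := by
      rw [abs_mul]; gcongr
    have heq : Fz π - Fz' π =
        α * ((z' - z) * (π * σ)) - α / 2 * (z' - z) * (z + z') - θ * (z' - z) := by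
      simp only [hFz, hFz']
      field_simp
      ring
    have h1 : |α * ((z' - z) * (π * σ))| ≤ α * (t * (P * |σ|)) := by
      rw [abs_mul, abs_mul, abs_of_pos hα, abs_sub_comm]
      gcongr
    have h2 : |α / 2 * (z' - z) * (z + z')| ≤ α / 2 * t * (|z| + |z'|) := by
      rw [abs_mul, abs_mul, abs_of_pos (half_pos hα), abs_sub_comm]
      gcongr
      exact abs_add_le z z'
    have h3 : |θ * (z' - z)| = |θ| * t := by
      rw [abs_mul, abs_sub_comm]
    rw [heq, hDdef, abs_le]
    constructor <;>
      nlinarith [le_abs_self (α * ((z' - z) * (π * σ))),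
        neg_abs_le (α * ((z' - z) * (π * σ))),
        le_abs_self (α / 2 * (z' - z) * (z + z')),
        neg_abs_le (α / 2 * (z' - z) * (z + z')),
        le_abs_self (θ * (z' - z)), neg_abs_le (θ * (z' - z))]
  have key : |sInf (Fz '' 𝒞) - sInf (Fz' '' 𝒞)| ≤ D := by
    rw [abs_le]
    constructor
    · have := csInf_sub_le_aux (F := Fz') (G := Fz) (D := D) h𝒞ne hF0' (fun a ha => by
        have := hdiff a ha; rw [abs_le] at this; linarith [this.1])
      linarith
    · exact csInf_sub_le_aux h𝒞ne hF0 (fun a ha => (abs_le.mp (hdiff a ha)).2)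
  have hgen : gen α θ σ β 𝒞 n z u - gen α θ σ β 𝒞 n z' u =
      (sInf (Fz '' 𝒞) - sInf (Fz' '' 𝒞)) + θ * (z' - z) := by
    simp only [gen, hFz, hFz']
    ring
  rw [hgen]
  have habs : |(sInf (Fz '' 𝒞) - sInf (Fz' '' 𝒞)) + θ * (z' - z)| ≤ D + |θ| * t := by
    refine (abs_add_le _ _).trans ?_
    gcongr
    rw [abs_mul, abs_sub_comm]
  refine habs.trans ?_
  rw [hDdef]
  nlinarith [mul_nonneg hs ht, mul_nonneg (mul_nonneg (abs_nonneg θ) hs) ht,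
    mul_nonneg (mul_nonneg (mul_nonneg hα.le hP0) (abs_nonneg σ)) (mul_nonneg hs ht),
    mul_nonneg hα.le ht, mul_nonneg (mul_nonneg hα.le hs) ht, ht,
    mul_nonneg (mul_nonneg hα.le hP0) (mul_nonneg (abs_nonneg σ) ht)]
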